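/- Let C ⊆ Γ be a subgroup of an abelian group Γ with weight function w (w(x) = 0 iff x = 0), inducing translation-invariant semimetric d(x,y) = w(x−y), and let w' be the factor weight on Γ/C given by w'(γ + C) = min over the coset of w. If C' is a set of coset representatives for a code in (Γ/C, w'), then the union of cosets C' + C is a code in Γ whose minimum distance equals min{ d_min(C), d_min(C') }, where d_min(C) = min_{0 ≠ c ∈ C} w(c) and d_min(C') is the minimum factor-weight distance between distinct cosets in C'. -/

import Mathlib

open Pointwise

theorem stmt14 {Γ : Type*} [AddCommGroup Γ] (w : Γ → ℕ∞) (hw : ∀ x, w x = 0 ↔ x = 0)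
    (C : AddSubgroup Γ) (C' : Set Γ) (hC'ne : C'.Nonempty)
    -- `C'` is a set of coset representatives: distinct elements lie in distinct cosets
    (hrep : ∀ x ∈ C', ∀ y ∈ C', x - y ∈ C → x = y) :
    -- the minimum distance of `C' + C` ...
    sInf {v : ℕ∞ | ∃ s ∈ C' + (C : Set Γ), ∃ t ∈ C' + (C : Set Γ), s ≠ t ∧ v = w (s - t)}
      -- ... equals the minimum of the minimum weight of `C` ...
      = min (sInf {v : ℕ∞ | ∃ c ∈ C, c ≠ (0 : Γ) ∧ v = w c})
            -- ... and the minimum factor-weight distance between distinct cosets in `C'`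
            (sInf {v : ℕ∞ | ∃ x ∈ C', ∃ y ∈ C', x - y ∉ C ∧
              v = ⨅ c ∈ C, w (x - y + c)}) := by
  apply le_antisymm
  · apply le_min
    · refine le_sInf ?_
      rintro v ⟨c, hc, hc0, rfl⟩
      obtain ⟨x0, hx0⟩ := hC'ne
      apply sInf_le
      refine ⟨x0 + c, ⟨x0, hx0, c, hc, rfl⟩, x0, ⟨x0, hx0, 0, C.zero_mem, add_zero _⟩,
        fun h => hc0 (add_eq_left.mp h), by rw [add_sub_cancel_left]⟩
    · refine le_sInf ?_
      rintro v ⟨x, hx, y, hy, hxy, rfl⟩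
      refine le_iInf₂ fun c hc => ?_
      apply sInf_le
      refine ⟨x + c, ⟨x, hx, c, hc, rfl⟩, y, ⟨y, hy, 0, C.zero_mem, add_zero _⟩, ?_, ?_⟩
      · intro h
        exact hxy (by simpa using (show x - y = -c by rw [← h]; abel) ▸ C.neg_mem hc)
      · congr 1; abel
  · refine le_sInf ?_
    rintro v ⟨s, ⟨x, hx, c1, hc1, rfl⟩, t, ⟨y, hy, c2, hc2, rfl⟩, hst, rfl⟩
    by_cases hxy : x = y
    · subst hxy
      refine le_trans (min_le_left _ _) (sInf_le ⟨c1 - c2, sub_mem hc1 hc2, ?_, ?_⟩)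
      · exact sub_ne_zero.mpr fun h => hst (by rw [h])
      · congr 1; beta_reduce; abel
    · have hxyC : x - y ∉ C := fun h => hxy (hrep x hx y hy h)
      refine le_trans (min_le_right _ _)
        (le_trans (sInf_le ⟨x, hx, y, hy, hxyC, rfl⟩) ?_)
      refine le_trans (iInf₂_le (c1 - c2) (sub_mem hc1 hc2)) (le_of_eq ?_)
      congr 1; beta_reduce; abel
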